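/- Theorem 1: Let G be an AMP CG over V and G' its EAMP CG with its deterministic relationships. Then the AMP independence model of G equals the AMP independence model of G' under marginalization of the error nodes: for all disjoint X, Y, Z ⊆ V, X ⊥_G Y | Z (AMP separation in G) holds if and only if X ⊥_{G'} Y | Z (AMP separation in G' with deterministic nodes) holds. -/

import Mathlib

/- Mixed graphs with directed and undirected edges. -/
structure MixedGraph (γ : Type*) where
  dir : γ → γ → Prop
  undir : γ → γ → Prop
  undir_symm : ∀ a b, undir a b → undir b a

namespace MixedGraph

variable {β : Type*} (G : MixedGraph β)

/-- Two nodes are adjacent if joined by some edge. -/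
def adj (a b : β) : Prop := G.dir a b ∨ G.dir b a ∨ G.undir a b

/-- The graph is simple: no loops and at most one edge between any pair. -/
def Simple : Prop :=
  (∀ a, ¬ G.dir a a) ∧ (∀ a, ¬ G.undir a a) ∧
  (∀ a b, G.dir a b → ¬ G.dir b a) ∧ (∀ a b, G.dir a b → ¬ G.undir a b)

/-- A semidirected cycle: a cycle whose first edge is directed and whose other
edges are directed or undirected (all pointing forwards). -/
def HasSemidirectedCycle : Prop :=
  ∃ (n : ℕ) (f : Fin (n + 2) → β),
    f 0 = f (Fin.last (n + 1)) ∧ G.dir (f 0) (f 1) ∧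
    ∀ i : Fin (n + 1), G.dir (f i.castSucc) (f i.succ) ∨ G.undir (f i.castSucc) (f i.succ)

/-- A chain graph: a simple graph with no semidirected cycle. -/
def IsChainGraph : Prop := G.Simple ∧ ¬ G.HasSemidirectedCycle

/-- A DAG: a chain graph with no undirected edges. -/
def IsDAG : Prop := G.IsChainGraph ∧ ∀ a b, ¬ G.undir a b

/-- Parents of a set of nodes. -/
def pa (X : Set β) : Set β := {v | v ∉ X ∧ ∃ x ∈ X, G.dir v x}

/-- Strict ascendants of a set of nodes (strictly descending route to the set). -/
def san (W : Set β) : Set β := {v | v ∉ W ∧ ∃ w ∈ W, Relation.TransGen G.dir v w}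

/-- B is a triplex node between A and C: A → B ← C, A → B − C, or A − B ← C. -/
def triplex (A B C : β) : Prop :=
  (G.dir A B ∧ G.dir C B) ∨ (G.dir A B ∧ G.undir B C) ∨ (G.undir A B ∧ G.dir C B)

/-- B is a non-triplex node between A and C. -/
def nontriplex (A B C : β) : Prop :=
  G.adj A B ∧ G.adj B C ∧ ¬ G.triplex A B C

/-- A route: a nonempty sequence of consecutively adjacent nodes. -/
def IsRoute (l : List β) : Prop := l ≠ [] ∧ l.Chain' G.adj

/-- A path that is open given the determined set `D` (AMP path-based semantics). -/
def AMPOpenPath (D : Set β) (l : List β) : Prop :=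
  G.IsRoute l ∧ l.Nodup ∧
  (∀ A B C, [A, B, C] <:+: l → G.triplex A B C → B ∈ D ∪ G.san D) ∧
  (∀ A B C, [A, B, C] <:+: l → G.nontriplex A B C → B ∈ D →
    (G.undir A B ∧ G.undir B C ∧ ∃ p ∈ G.pa {B}, p ∉ D))

/-- A route that is open given the determined set `D` (AMP route-based semantics). -/
def AMPOpenRoute (D : Set β) (l : List β) : Prop :=
  G.IsRoute l ∧
  (∀ A B C, [A, B, C] <:+: l → G.triplex A B C → B ∈ D) ∧
  (∀ A B C, [A, B, C] <:+: l → G.nontriplex A B C → B ∉ D)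

/-- AMP separation (path-based) of X and Y given determined set D. -/
def AMPSep (D X Y : Set β) : Prop :=
  ∀ (l : List β) (x y : β), x ∈ X → y ∈ Y → l.head? = some x → l.getLast? = some y →
    ¬ G.AMPOpenPath D l

/-- AMP separation (route-based) of X and Y given determined set D. -/
def AMPSepRoute (D X Y : Set β) : Prop :=
  ∀ (l : List β) (x y : β), x ∈ X → y ∈ Y → l.head? = some x → l.getLast? = some y →
    ¬ G.AMPOpenRoute D l

/-- `s` is a collider section of the route `l`: a maximal undirected subroute of `l`
entered by arrowheads at both ends. -/
def IsColliderSection (l s : List β) : Prop :=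
  s ≠ [] ∧ List.Chain' G.undir s ∧
  ∃ pre post A C, l = pre ++ s ++ post ∧
    pre.getLast? = some A ∧ post.head? = some C ∧
    (∀ b, s.head? = some b → G.dir A b) ∧ (∀ b, s.getLast? = some b → G.dir C b) ∧
    (∀ a b, pre.getLast? = some a → s.head? = some b → ¬ G.undir a b) ∧
    (∀ a b, s.getLast? = some a → post.head? = some b → ¬ G.undir a b)

/-- `s` is a non-collider section of the route `l`: a maximal undirected subroute of `l`
not entered by arrowheads at both ends. -/
def IsNonColliderSection (l s : List β) : Prop :=
  s ≠ [] ∧ List.Chain' G.undir s ∧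
  ∃ pre post, l = pre ++ s ++ post ∧
    (∀ a b, pre.getLast? = some a → s.head? = some b → ¬ G.undir a b) ∧
    (∀ a b, s.getLast? = some a → post.head? = some b → ¬ G.undir a b) ∧
    ¬ ((∃ A, pre.getLast? = some A ∧ ∀ b, s.head? = some b → G.dir A b) ∧
       (∃ C, post.head? = some C ∧ ∀ b, s.getLast? = some b → G.dir C b))

/-- A route that is open given the determined set `D` (LWF semantics). -/
def LWFOpenRoute (D : Set β) (l : List β) : Prop :=
  G.IsRoute l ∧
  (∀ s, G.IsColliderSection l s → ∃ x ∈ s, x ∈ D) ∧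
  (∀ s, G.IsNonColliderSection l s → ∀ x ∈ s, x ∉ D)

/-- LWF separation of X and Y given determined set D. -/
def LWFSep (D X Y : Set β) : Prop :=
  ∀ (l : List β) (x y : β), x ∈ X → y ∈ Y → l.head? = some x → l.getLast? = some y →
    ¬ G.LWFOpenRoute D l

/-- Closure of Z under a set `det` of deterministic relationships: `(S, a) ∈ det`
means that `a` is a function of `S`. -/
inductive Determined (det : Set (Set β × β)) (Z : Set β) : β → Prop
  | base : ∀ a, a ∈ Z → Determined det Z a
  | step : ∀ (S : Set β) (a : β), (S, a) ∈ det → (∀ b ∈ S, Determined det Z b) →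
      Determined det Z a

/-- The set D(Z) of nodes determined by Z. -/
def DSet (det : Set (Set β × β)) (Z : Set β) : Set β := {a | Determined det Z a}

end MixedGraph

section EAMP

variable {α : Type*}

/-- Directed edges of the EAMP CG: `inl` nodes are the original nodes,
`inr` nodes are the error nodes. -/
def eampDir (G : MixedGraph α) : (α ⊕ α) → (α ⊕ α) → Prop
  | Sum.inl x, Sum.inl y => G.dir x y
  | Sum.inr x, Sum.inl y => x = y
  | _, _ => False

/-- Undirected edges of the EAMP CG: `ε^A − ε^B` for each `A − B` of G. -/
def eampUndir (G : MixedGraph α) : (α ⊕ α) → (α ⊕ α) → Prop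
  | Sum.inr x, Sum.inr y => G.undir x y
  | _, _ => False

/-- The EAMP CG G' of an AMP CG G: add `ε^A → A` for each node A and replace
each undirected edge `A − B` by `ε^A − ε^B`. -/
def eamp (G : MixedGraph α) : MixedGraph (α ⊕ α) where
  dir := eampDir G
  undir := eampUndir G
  undir_symm := by
    rintro (x | x) (y | y) h <;>
      simp only [eampUndir] at h ⊢ <;>
      first
        | exact h.elim
        | exact G.undir_symm _ _ h

/-- The parents of A in G, embedded as nodes of the EAMP CG. -/
def eampPa (G : MixedGraph α) (A : α) : Set (α ⊕ α) := {x | ∃ B, G.dir B A ∧ x = Sum.inl B}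

/-- The deterministic relationships of the EAMP CG: each A is a function of
`pa_G(A) ∪ {ε^A}`, and each `ε^A` is a function of `pa_G(A) ∪ {A}`. -/
def eampDet (G : MixedGraph α) : Set (Set (α ⊕ α) × (α ⊕ α)) :=
  {p | (∃ A, p = (eampPa G A ∪ {Sum.inr A}, Sum.inl A)) ∨
       (∃ A, p = (eampPa G A ∪ {Sum.inl A}, Sum.inr A))}

/-- Marginalize the node B out of G: add `A → C` for every pair `A → B`, `B → C`,
then delete B together with all edges it participates in. -/
def marg {β : Type*} (G : MixedGraph β) (B : β) : MixedGraph β where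
  dir a c := a ≠ B ∧ c ≠ B ∧ (G.dir a c ∨ (G.dir a B ∧ G.dir B c))
  undir a c := a ≠ B ∧ c ≠ B ∧ G.undir a c
  undir_symm := by
    rintro a c ⟨h1, h2, h3⟩
    exact ⟨h2, h1, G.undir_symm _ _ h3⟩

/-- Marginalize a list of nodes out of G, one at a time. -/
def margList {β : Type*} (G : MixedGraph β) (L : List β) : MixedGraph β := L.foldl marg G

/-- Directed edges of the DAG G'': those of G' among `V ∪ ε`, plus
`ε^A → S_{ε^Aε^B} ← ε^B` for each undirected edge `ε^A − ε^B` of G'. -/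
def dagDir (G : MixedGraph α) : ((α ⊕ α) ⊕ Sym2 α) → ((α ⊕ α) ⊕ Sym2 α) → Prop
  | Sum.inl x, Sum.inl y => (eamp G).dir x y
  | Sum.inl (Sum.inr x), Sum.inr s => ∃ y, G.undir x y ∧ s = s(x, y)
  | _, _ => False

/-- The DAG G'' obtained from G' by replacing each `ε^A − ε^B` with
`ε^A → S_{ε^Aε^B} ← ε^B`, where the selection nodes are fresh. -/
def dagOf (G : MixedGraph α) : MixedGraph ((α ⊕ α) ⊕ Sym2 α) where
  dir := dagDir G
  undir _ _ := False
  undir_symm := by intro a b h; exact h.elim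

/-- The set S of selection nodes of G''. -/
def selNodes (G : MixedGraph α) : Set ((α ⊕ α) ⊕ Sym2 α) :=
  {v | ∃ x y, G.undir x y ∧ v = Sum.inr s(x, y)}

/-- The deterministic relationships of G'' (the same as those of G'). -/
def dagDet (G : MixedGraph α) : Set (Set ((α ⊕ α) ⊕ Sym2 α) × ((α ⊕ α) ⊕ Sym2 α)) :=
  {p | ∃ q ∈ eampDet G, p = (Sum.inl '' q.1, Sum.inl q.2)}

/-- Structural characterization of EAMP CGs over `W ∪ ε`: a chain graph whose
undirected edges join only error nodes and whose error nodes have no incoming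
directed edges. -/
def IsEAMPStruct (G : MixedGraph (α ⊕ α)) : Prop :=
  G.IsChainGraph ∧
  (∀ a b, G.undir a b → (∃ x, a = Sum.inr x) ∧ ∃ y, b = Sum.inr y) ∧
  (∀ a x, ¬ G.dir a (Sum.inr x))

/-- K is a connectivity component: a maximal set connected by undirected paths. -/
def IsConnComp {β : Type*} (G : MixedGraph β) (K : Set β) : Prop :=
  ∃ a, K = {b | Relation.ReflTransGen G.undir a b}

end EAMP

/-! ### Auxiliary machinery -/

section WalkMachinery

open List Relation

variable {β : Type*}

namespace MixedGraph

/-- Open walk: like `AMPOpenPath` but without the nonempty/nodup requirements. -/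
def OW (H : MixedGraph β) (D : Set β) (l : List β) : Prop :=
  l.Chain' H.adj ∧
  (∀ A B C, [A,B,C] <:+: l → H.triplex A B C → B ∈ D ∪ H.san D) ∧
  (∀ A B C, [A,B,C] <:+: l → H.nontriplex A B C → B ∈ D →
    (H.undir A B ∧ H.undir B C ∧ ∃ p ∈ H.pa {B}, p ∉ D))

variable {H : MixedGraph β} {D : Set β}

lemma ampOpenPath_iff_ow {l : List β} :
    H.AMPOpenPath D l ↔ (l ≠ [] ∧ l.Nodup ∧ H.OW D l) := by
  unfold AMPOpenPath IsRoute OW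
  tauto

lemma adj_symm {a b : β} (h : H.adj a b) : H.adj b a := by
  rcases h with h | h | h
  · exact Or.inr (Or.inl h)
  · exact Or.inl h
  · exact Or.inr (Or.inr (H.undir_symm _ _ h))

lemma not_dir_of_undir (hS : H.Simple) {a b : β} (h : H.undir a b) :
    ¬ H.dir a b ∧ ¬ H.dir b a :=
  ⟨fun hd => hS.2.2.2 _ _ hd h, fun hd => hS.2.2.2 _ _ hd (H.undir_symm _ _ h)⟩

lemma triplex_symm {A B C : β} (h : H.triplex A B C) : H.triplex C B A := by
  rcases h with ⟨h1, h2⟩ | ⟨h1, h2⟩ | ⟨h1, h2⟩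
  · exact Or.inl ⟨h2, h1⟩
  · exact Or.inr (Or.inr ⟨H.undir_symm _ _ h2, h1⟩)
  · exact Or.inr (Or.inl ⟨h2, H.undir_symm _ _ h1⟩)

lemma nontriplex_symm {A B C : β} (h : H.nontriplex A B C) : H.nontriplex C B A :=
  ⟨adj_symm h.2.1, adj_symm h.1, fun ht => h.2.2 (triplex_symm ht)⟩

lemma not_triplex_out (hS : H.Simple) {A B C : β} (h : H.dir B A ∨ H.dir B C) :
    ¬ H.triplex A B C := by
  rintro (⟨h1, h2⟩ | ⟨h1, h2⟩ | ⟨h1, h2⟩) <;> rcases h with h | h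
  · exact hS.2.2.1 _ _ h1 h
  · exact hS.2.2.1 _ _ h2 h
  · exact hS.2.2.1 _ _ h1 h
  · exact hS.2.2.2 _ _ h h2
  · exact hS.2.2.2 _ _ h (H.undir_symm _ _ h1)
  · exact hS.2.2.1 _ _ h2 h

lemma adj_of_infix3 {l : List β} (hc : l.Chain' H.adj) {A B C : β}
    (h : [A,B,C] <:+: l) : H.adj A B ∧ H.adj B C := by
  have h2 := hc.infix h
  simp only [List.isChain_cons_cons, List.isChain_singleton, and_true] at h2
  exact h2

lemma L1 (hS : H.Simple) {l : List β} (hOW : H.OW D l) {A B C : β}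
    (h3 : [A,B,C] <:+: l) (hd : H.dir B A ∨ H.dir B C) : B ∉ D := by
  intro hBD
  have hadj := adj_of_infix3 hOW.1 h3
  have hnt : H.nontriplex A B C := ⟨hadj.1, hadj.2, not_triplex_out hS hd⟩
  obtain ⟨u1, u2, -⟩ := hOW.2.2 A B C h3 hnt hBD
  rcases hd with h | h
  · exact (not_dir_of_undir hS u1).2 h
  · exact (not_dir_of_undir hS u2).1 h

lemma infix3_iff {l : List β} {A B C : β} :
    [A,B,C] <:+: l ↔ ∃ i, l[i]? = some A ∧ l[i+1]? = some B ∧ l[i+2]? = some C := by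
  constructor
  · rintro ⟨s, t, rfl⟩
    refine ⟨s.length, ?_, ?_, ?_⟩ <;>
      rw [List.append_assoc, List.getElem?_append_right (by omega)] <;>
      simp
  · rintro ⟨i, h0, h1, h2⟩
    obtain ⟨e0, g0⟩ := List.getElem?_eq_some_iff.1 h0
    obtain ⟨e1, g1⟩ := List.getElem?_eq_some_iff.1 h1
    obtain ⟨e2, g2⟩ := List.getElem?_eq_some_iff.1 h2
    refine ⟨l.take i, l.drop (i+3), ?_⟩
    have hd : l.drop i = A :: B :: C :: l.drop (i+3) := by
      rw [List.drop_eq_getElem_cons e0, List.drop_eq_getElem_cons e1,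
        List.drop_eq_getElem_cons e2, g0, g1, g2]
    calc l.take i ++ [A,B,C] ++ l.drop (i+3)
        = l.take i ++ l.drop i := by rw [hd]; simp
      _ = l := List.take_append_drop i l

lemma exists_splice_of_not_nodup {l : List β} (h : ¬ l.Nodup) :
    ∃ (B : β) (p q r : List β), l = p ++ B :: q ++ B :: r := by
  induction l with
  | nil => simp at h
  | cons a t ih =>
    by_cases ha : a ∈ t
    · obtain ⟨q, r, rfl⟩ := List.append_of_mem ha
      exact ⟨a, [], q, r, rfl⟩
    · have ht : ¬ t.Nodup := fun hn => h (List.nodup_cons.2 ⟨ha, hn⟩)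
      obtain ⟨B, p, q, r, rfl⟩ := ih ht
      exact ⟨B, a :: p, q, r, rfl⟩

lemma chain_append_single {r : β → β → Prop} :
    ∀ (L : List β) (a m c : β), List.Chain r a L → L.getLast? = some m → r m c →
      List.Chain r a (L ++ [c])
  | [], a, m, c, _, hl, _ => by simp at hl
  | [d], a, m, c, hch, hl, hmc => by
      simp only [List.getLast?_singleton, Option.some_inj] at hl
      subst hl
      simp only [List.singleton_append, List.chain_cons] at hch ⊢
      exact List.isChain_cons_cons.2 ⟨List.isChain_pair.1 hch, List.isChain_cons_cons.2 ⟨hmc, List.isChain_singleton _⟩⟩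
  | d :: e :: L', a, m, c, hch, hl, hmc => by
      change List.IsChain r (a :: d :: e :: L') at hch
      change List.IsChain r (a :: (d :: e :: L' ++ [c]))
      rw [List.chain_cons] at hch
      rw [List.cons_append, List.chain_cons]
      exact ⟨hch.1, chain_append_single (e :: L') d m c hch.2 hl hmc⟩

lemma chain_of_transGen {r : β → β → Prop} {a b : β} (h : Relation.TransGen r a b) :
    ∃ L, L ≠ [] ∧ List.Chain r a L ∧ L.getLast? = some b := by
  induction h with
  | single h => exact ⟨[_], by simp, List.isChain_cons_cons.2 ⟨h, List.isChain_singleton _⟩, rfl⟩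
  | tail hab hbc ih =>
    obtain ⟨L, hne, hch, hl⟩ := ih
    exact ⟨L ++ [_], by simp, chain_append_single L _ _ _ hch hl hbc,
      List.getLast?_concat⟩

lemma semicycle_of_list {H : MixedGraph β} (hH : ¬ H.HasSemidirectedCycle) {a : β}
    (L : List β) (hne : L ≠ [])
    (hch : List.Chain (fun x y => H.dir x y ∨ H.undir x y) a L)
    (hfirst : ∀ c, L.head? = some c → H.dir a c)
    (hlast : L.getLast? = some a) : False := by
  obtain ⟨n, hn⟩ : ∃ n, L.length = n + 1 := by
    cases L with
    | nil => exact absurd rfl hne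
    | cons x t => exact ⟨t.length, rfl⟩
  set M : List β := a :: L with hM
  have hMlen : M.length = n + 2 := by simp [hM, hn]
  have hgetM : ∀ j (h : j < n + 2), M.getD j a = M[j]'(by omega) := by
    intro j h
    rw [List.getD_eq_getElem?_getD, List.getElem?_eq_getElem (by omega)]
    rfl
  apply hH
  refine ⟨n, fun i => M.getD i.val a, ?_, ?_, ?_⟩
  · show M.getD 0 a = M.getD (n+1) a
    have h1 : M.getD 0 a = a := rfl
    have h2 : M.getD (n+1) a = a := by
      obtain ⟨c0, L', rfl⟩ := List.exists_cons_of_ne_nil hne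
      rw [List.getD_eq_getElem?_getD,
        show M[n+1]? = M.getLast? from by rw [List.getLast?_eq_getElem?, hMlen]; norm_num,
        hM, List.getLast?_cons_cons, hlast]
      rfl
    rw [h1, h2]
  · show H.dir (M.getD 0 a) (M.getD 1 a)
    obtain ⟨c, L', rfl⟩ := List.exists_cons_of_ne_nil hne
    exact hfirst c rfl
  · intro i
    have hi : i.val < n + 1 := i.isLt
    show H.dir (M.getD i.val a) (M.getD (i.val+1) a) ∨
      H.undir (M.getD i.val a) (M.getD (i.val+1) a)
    have hc : (∀ h : 0 < L.length, (fun x y => H.dir x y ∨ H.undir x y) a (L.get ⟨0, h⟩)) ∧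
        ∀ i (h : i < L.length - 1), (fun x y => H.dir x y ∨ H.undir x y)
          (L.get ⟨i, by omega⟩) (L.get ⟨i+1, by omega⟩) := by
      have hc0 := List.isChain_iff_getElem.1 (show List.IsChain _ (a :: L) from hch)
      exact ⟨fun h => hc0 0 (by simp; omega), fun i h => hc0 (i+1) (by simp; omega)⟩
    have hLget : ∀ k (h : k < L.length), M.getD (k+1) a = L.get ⟨k, h⟩ := by
      intro k h
      show L.getD k a = _
      rw [List.getD_eq_getElem?_getD, List.getElem?_eq_getElem h]
      rfl
    rcases Nat.eq_zero_or_pos i.val with h0 | hpos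
    · rw [h0, hLget 0 (by omega)]
      exact hc.1 (by omega)
    · obtain ⟨k, hk⟩ : ∃ k, i.val = k + 1 := ⟨i.val - 1, by omega⟩
      rw [hk, hLget k (by omega), hLget (k+1) (by omega)]
      exact hc.2 k (by omega)

lemma noCycleClose {H : MixedGraph β} (hH : H.IsChainGraph) {a b : β}
    (h : Relation.TransGen H.dir a b) (hc : b = a ∨ H.undir b a) : False := by
  obtain ⟨L, hne, hch, hl⟩ := chain_of_transGen h
  rcases hc with rfl | hba
  · refine semicycle_of_list hH.2 L hne (List.IsChain.imp (fun _ _ h => Or.inl h) hch) ?_ hl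
    intro c hc
    obtain ⟨c0, L', rfl⟩ := List.exists_cons_of_ne_nil hne
    obtain rfl : c = c0 := by simpa using hc.symm
    exact (List.chain_cons.1 hch).1
  · refine semicycle_of_list hH.2 (L ++ [a]) (by simp)
      (chain_append_single L _ _ _ (List.IsChain.imp (fun _ _ h => Or.inl h) hch) hl (Or.inr hba)) ?_
      (List.getLast?_concat)
    intro c hc
    obtain ⟨c0, L', rfl⟩ := List.exists_cons_of_ne_nil hne
    obtain rfl : c = c0 := by simpa using hc.symm
    exact (List.chain_cons.1 hch).1

lemma sanStep {B c : β} (h : Relation.TransGen H.dir B c) (hc : c ∈ D ∪ H.san D) :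
    B ∈ D ∪ H.san D := by
  by_cases hB : B ∈ D
  · exact Or.inl hB
  · right
    rcases hc with hc | ⟨hcD, w, hw, hcw⟩
    · exact ⟨hB, c, hc, h⟩
    · exact ⟨hB, w, hw, h.trans hcw⟩

lemma march (hH : H.IsChainGraph) {l : List β} (hOW : H.OW D l) (w : List β) (B : β) :
    ∀ (t s : List β) (v c : β), l = s ++ v :: c :: (t ++ B :: w) → H.dir v c →
      Relation.TransGen H.dir B c → B ∈ D ∪ H.san D := by
  intro t
  induction t with
  | nil =>
    intro s v c hl hvc htg
    have h3 : [v, c, B] <:+: l := ⟨s, w, by rw [hl]; simp⟩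
    have hadj := (adj_of_infix3 hOW.1 h3).2
    rcases hadj with h | h | h
    · exact absurd (htg.tail h) (fun ht => noCycleClose hH ht (Or.inl rfl))
    · exact sanStep htg (hOW.2.1 _ _ _ h3 (Or.inl ⟨hvc, h⟩))
    · exact sanStep htg (hOW.2.1 _ _ _ h3 (Or.inr (Or.inl ⟨hvc, h⟩)))
  | cons d t' ih =>
    intro s v c hl hvc htg
    have h3 : [v, c, d] <:+: l := ⟨s, t' ++ B :: w, by rw [hl]; simp⟩
    have hadj := (adj_of_infix3 hOW.1 h3).2
    rcases hadj with h | h | h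
    · exact ih (s ++ [v]) c d (by rw [hl]; simp) h (htg.tail h)
    · exact sanStep htg (hOW.2.1 _ _ _ h3 (Or.inl ⟨hvc, h⟩))
    · exact sanStep htg (hOW.2.1 _ _ _ h3 (Or.inr (Or.inl ⟨hvc, h⟩)))

lemma OW.rev {l : List β} (hOW : H.OW D l) : H.OW D l.reverse := by
  obtain ⟨hc, h1, h2⟩ := hOW
  have hinf : ∀ A B C : β, [A,B,C] <:+: l.reverse → [C,B,A] <:+: l := by
    intro A B C h
    have h' : ([C,B,A] : List β).reverse <:+: l.reverse := by simpa using h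
    exact List.reverse_infix.1 h'
  refine ⟨?_, ?_, ?_⟩
  · rw [List.Chain', List.isChain_reverse]
    exact List.IsChain.imp (fun a b h => adj_symm h) hc
  · intro A B C h ht
    exact h1 C B A (hinf A B C h) (triplex_symm ht)
  · intro A B C h hnt hBD
    obtain ⟨u1, u2, hp⟩ := h2 C B A (hinf A B C h) (nontriplex_symm hnt) hBD
    exact ⟨H.undir_symm _ _ u2, H.undir_symm _ _ u1, hp⟩

lemma infix3_splice {p r : List β} {B A B' C : β}
    (h : [A,B',C] <:+: p ++ B :: r) :
    [A,B',C] <:+: p ++ [B] ∨ [A,B',C] <:+: B :: r ∨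
      (B' = B ∧ p.getLast? = some A ∧ r.head? = some C) := by
  rw [infix3_iff] at h
  obtain ⟨i, h0, h1, h2⟩ := h
  have key : ∀ j, j ≤ p.length → (p ++ B :: r)[j]? = (p ++ [B])[j]? := by
    intro j hj
    rcases lt_or_eq_of_le hj with hj | rfl
    · rw [List.getElem?_append_left hj, List.getElem?_append_left hj]
    · rw [List.getElem?_append_right (le_refl _), List.getElem?_append_right (le_refl _)]
      simp
  have keyr : ∀ j, p.length ≤ j → (p ++ B :: r)[j]? = (B :: r)[j - p.length]? :=
    fun j hj => List.getElem?_append_right hj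
  rcases (by omega : i + 2 ≤ p.length ∨ p.length ≤ i ∨ i + 1 = p.length) with hi | hi | hi
  · left
    rw [infix3_iff]
    exact ⟨i, by rw [← key i (by omega)]; exact h0, by rw [← key (i+1) (by omega)]; exact h1,
      by rw [← key (i+2) (by omega)]; exact h2⟩
  · right; left
    rw [infix3_iff]
    refine ⟨i - p.length, ?_, ?_, ?_⟩
    · rw [← keyr i hi]; exact h0
    · rw [show i - p.length + 1 = i + 1 - p.length by omega, ← keyr (i+1) (by omega)]; exact h1
    · rw [show i - p.length + 2 = i + 2 - p.length by omega, ← keyr (i+2) (by omega)]; exact h2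
  · right; right
    have hB' : (p ++ B :: r)[i+1]? = some B := by
      rw [keyr (i+1) (by omega), show i + 1 - p.length = 0 by omega]
      simp
    refine ⟨by rw [hB'] at h1; exact (Option.some_inj.1 h1.symm), ?_, ?_⟩
    · rw [List.getLast?_eq_getElem?, show p.length - 1 = i by omega, ← List.getElem?_append_left (by omega : i < p.length)]
      exact h0
    · rw [List.head?_eq_getElem?]
      have := h2
      rw [keyr (i+2) (by omega), show i + 2 - p.length = 1 by omega] at this
      simpa using this

end MixedGraph

end WalkMachinery

section SpliceMachinery

open List Relation

variable {β : Type*}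

namespace MixedGraph

variable {H : MixedGraph β} {D : Set β}

lemma OW.splice (hH : H.IsChainGraph) {p q r : List β} {B : β}
    (hOW : H.OW D (p ++ B :: q ++ B :: r)) : H.OW D (p ++ B :: r) := by
  have hS := hH.1
  have hqne : q ≠ [] := by
    rintro rfl
    have h2 : [B, B] <:+: p ++ B :: [] ++ B :: r := ⟨p, r, by simp⟩
    have hch := hOW.1.infix h2
    simp only [List.isChain_cons_cons, List.isChain_singleton, and_true] at hch
    rcases hch with h | h | h
    · exact hS.1 _ h
    · exact hS.1 _ h
    · exact hS.2.1 _ h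
  obtain ⟨q0, q', rfl⟩ := List.exists_cons_of_ne_nil hqne
  rcases List.eq_nil_or_concat (q0 :: q') with hbad | ⟨q'', qL, hq2'⟩
  · exact absurd hbad (by simp)
  have hq2 : q0 :: q' = q'' ++ [qL] := by rw [hq2', List.concat_eq_append]
  have hprefix : (p ++ [B]) <+: p ++ B :: q0 :: q' ++ B :: r := ⟨q0 :: q' ++ B :: r, by simp⟩
  have hsuffix : (B :: r) <:+ p ++ B :: q0 :: q' ++ B :: r := ⟨p ++ B :: q0 :: q', by simp⟩
  -- boundary data, shared by T1 and T2 branches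
  have hbound : ∀ A C, p.getLast? = some A → r.head? = some C →
      ([A, B, q0] <:+: p ++ B :: q0 :: q' ++ B :: r) ∧
      ([qL, B, C] <:+: p ++ B :: q0 :: q' ++ B :: r) := by
    intro A C hA hC
    obtain ⟨p', rfl⟩ := List.getLast?_eq_some_iff.1 hA
    obtain ⟨r', rfl⟩ := List.head?_eq_some_iff.1 hC
    constructor
    · exact ⟨p', q' ++ B :: C :: r', by simp⟩
    · refine ⟨(p' ++ [A]) ++ B :: q'', r', ?_⟩
      rw [show (p' ++ [A]) ++ B :: q0 :: q' ++ B :: C :: r'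
          = (p' ++ [A]) ++ B :: ((q0 :: q') ++ B :: C :: r') by simp, hq2]
      simp
  refine ⟨?_, ?_, ?_⟩
  · rw [List.Chain', List.isChain_append]
    have hpp : p <+: p ++ B :: q0 :: q' ++ B :: r := ⟨B :: q0 :: q' ++ B :: r, by simp⟩
    have hsp := (List.isChain_append (R := H.adj) (l₁ := p) (l₂ := B :: (q0 :: q' ++ B :: r))).1
      (by simpa [List.Chain'] using hOW.1)
    refine ⟨hOW.1.infix hpp.isInfix, hOW.1.infix hsuffix.isInfix, ?_⟩
    intro x hx y hy
    have hyB : B = y := by simpa using hy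
    subst hyB
    exact hsp.2.2 x hx B (by simp)
  · intro A B' C h ht
    rcases infix3_splice h with h | h | ⟨hBB, hA, hC⟩
    · exact hOW.2.1 A B' C (h.trans hprefix.isInfix) ht
    · exact hOW.2.1 A B' C (h.trans hsuffix.isInfix) ht
    · rw [hBB] at ht h ⊢
      obtain ⟨ht1, ht2⟩ := hbound A C hA hC
      have hadj1 := adj_of_infix3 hOW.1 ht1
      have hadj2 := adj_of_infix3 hOW.1 ht2
      by_cases hBD : B ∈ D
      · exact Or.inl hBD
      have key1 : H.dir A B → B ∈ D ∪ H.san D := by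
        intro hab
        by_cases ht1x : H.triplex A B q0
        · exact hOW.2.1 _ _ _ ht1 ht1x
        · have hbq0 : H.dir B q0 := by
            rcases hadj1.2 with h | h | h
            · exact h
            · exact absurd (Or.inl ⟨hab, h⟩) ht1x
            · exact absurd (Or.inr (Or.inl ⟨hab, h⟩)) ht1x
          exact march hH hOW r B q' p B q0 (by simp) hbq0 (TransGen.single hbq0)
      have key2 : H.dir C B → B ∈ D ∪ H.san D := by
        intro hcb
        by_cases ht2x : H.triplex qL B C
        · exact hOW.2.1 _ _ _ ht2 ht2x
        · have hbqL : H.dir B qL := by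
            rcases hadj2.1 with h | h | h
            · exact absurd (Or.inl ⟨h, hcb⟩) ht2x
            · exact h
            · exact absurd (Or.inr (Or.inr ⟨h, hcb⟩)) ht2x
          refine march hH hOW.rev p.reverse B q''.reverse r.reverse B qL ?_ hbqL
            (TransGen.single hbqL)
          rw [show p ++ B :: q0 :: q' ++ B :: r
              = p ++ [B] ++ (q0 :: q') ++ [B] ++ r by simp, hq2]
          simp
      rcases ht with ⟨hab, hcb⟩ | ⟨hab, hbc⟩ | ⟨hab, hcb⟩
      · exact key1 hab
      · exact key1 hab
      · exact key2 hcb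
  · intro A B' C h hnt hBD
    rcases infix3_splice h with h | h | ⟨hBB, hA, hC⟩
    · exact hOW.2.2 A B' C (h.trans hprefix.isInfix) hnt hBD
    · exact hOW.2.2 A B' C (h.trans hsuffix.isInfix) hnt hBD
    · rw [hBB] at hnt hBD h ⊢
      obtain ⟨ht1, ht2⟩ := hbound A C hA hC
      have hadj1 := adj_of_infix3 hOW.1 ht1
      have hadj2 := adj_of_infix3 hOW.1 ht2
      have hu1 : H.undir A B := by
        rcases hadj1.1 with h1 | h1 | h1
        · rcases hadj2.2 with h4 | h4 | h4
          · exact absurd hBD (L1 hS hOW ht2 (Or.inr h4))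
          · exact absurd (Or.inl ⟨h1, h4⟩) hnt.2.2
          · exact absurd (Or.inr (Or.inl ⟨h1, h4⟩)) hnt.2.2
        · exact absurd hBD (L1 hS hOW ht1 (Or.inl h1))
        · exact h1
      have hu2 : H.undir B C := by
        rcases hadj2.2 with h4 | h4 | h4
        · exact absurd hBD (L1 hS hOW ht2 (Or.inr h4))
        · exact absurd (Or.inr (Or.inr ⟨hu1, h4⟩)) hnt.2.2
        · exact h4
      refine ⟨hu1, hu2, ?_⟩
      rcases hadj1.2 with h2 | h2 | h2
      · exact absurd hBD (L1 hS hOW ht1 (Or.inr h2))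
      · -- dir q0 B : q0 is a parent of B outside D
        refine ⟨q0, ⟨?_, B, rfl, h2⟩, ?_⟩
        · intro hmem
          rw [Set.mem_singleton_iff] at hmem
          subst hmem
          exact hS.1 _ h2
        · cases q' with
          | nil =>
            exact L1 hS hOW (⟨p, r, by simp⟩ : [B, q0, B] <:+: _) (Or.inl h2)
          | cons q1 q'' =>
            exact L1 hS hOW (⟨p, q'' ++ B :: r, by simp⟩ : [B, q0, q1] <:+: _) (Or.inl h2)
      · -- undir B q0 : old T2 applies at (A, B, q0)
        have hnt1 : H.nontriplex A B q0 := by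
          refine ⟨hadj1.1, hadj1.2, ?_⟩
          rintro (⟨hd, -⟩ | ⟨hd, -⟩ | ⟨-, hd⟩)
          · exact (not_dir_of_undir hS hu1).1 hd
          · exact (not_dir_of_undir hS hu1).1 hd
          · exact (not_dir_of_undir hS h2).2 hd
        exact (hOW.2.2 A B q0 ht1 hnt1 hBD).2.2

lemma OW.toPath (hH : H.IsChainGraph) :
    ∀ (n : ℕ) (l : List β), l.length ≤ n → H.OW D l →
      ∃ l', l'.Nodup ∧ H.OW D l' ∧ l'.head? = l.head? ∧ l'.getLast? = l.getLast? := by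
  intro n
  induction n with
  | zero =>
    intro l hl hOW
    exact ⟨l, by rw [List.length_eq_zero_iff.1 (Nat.le_zero.1 hl)]; exact List.nodup_nil,
      hOW, rfl, rfl⟩
  | succ n ih =>
    intro l hl hOW
    by_cases hnd : l.Nodup
    · exact ⟨l, hnd, hOW, rfl, rfl⟩
    · obtain ⟨B, p, q, r, rfl⟩ := exists_splice_of_not_nodup hnd
      have hOW' := OW.splice hH hOW
      have hlen : (p ++ B :: r).length ≤ n := by
        simp only [List.length_append, List.length_cons] at hl ⊢
        omega
      obtain ⟨l', h1, h2, h3, h4⟩ := ih _ hlen hOW'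
      have hlast : ∀ (u : List β), (u ++ B :: r).getLast? = (B :: r).getLast? := by
        intro u
        rw [List.getLast?_append]
        cases hr : (B :: r).getLast? with
        | none => exact absurd hr (by simp)
        | some z => rfl
      refine ⟨l', h1, h2, ?_, ?_⟩
      · rw [h3]
        cases p with
        | nil => rfl
        | cons a p' => rfl
      · rw [h4, hlast p, show p ++ B :: q ++ B :: r = (p ++ B :: q) ++ B :: r by simp,
          hlast (p ++ B :: q)]

end MixedGraph

end SpliceMachinery

section EampFacts

open List Relation Sum

variable {α : Type*}

/-- The explicit description of determined nodes. -/
def detP (G : MixedGraph α) (Z : Set α) : α ⊕ α → Prop := fun v =>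
  match v with
  | Sum.inl a => a ∈ Z
  | Sum.inr a => a ∈ Z ∧ ∀ b, G.dir b a → b ∈ Z

lemma det_iff (G : MixedGraph α) (Z : Set α) (v : α ⊕ α) :
    MixedGraph.Determined (eampDet G) (Sum.inl '' Z) v ↔ detP G Z v := by
  constructor
  · intro h
    induction h with
    | base a ha =>
      obtain ⟨z, hz, rfl⟩ := ha
      exact hz
    | step S a hmem hall ih =>
      rcases hmem with ⟨A, heq⟩ | ⟨A, heq⟩
      · have hS : S = eampPa G A ∪ {Sum.inr A} := congrArg Prod.fst heq
        have ha : a = Sum.inl A := congrArg Prod.snd heq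
        subst ha
        have hmem2 : Sum.inr A ∈ S := by rw [hS]; exact Or.inr rfl
        exact (ih _ hmem2).1
      · have hS : S = eampPa G A ∪ {Sum.inl A} := congrArg Prod.fst heq
        have ha : a = Sum.inr A := congrArg Prod.snd heq
        subst ha
        have hA : Sum.inl A ∈ S := by rw [hS]; exact Or.inr rfl
        refine ⟨ih _ hA, fun b hb => ?_⟩
        have hbmem : Sum.inl b ∈ S := by rw [hS]; exact Or.inl ⟨b, hb, rfl⟩
        exact ih _ hbmem
  · intro h
    match v with
    | Sum.inl a => exact MixedGraph.Determined.base _ ⟨a, h, rfl⟩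
    | Sum.inr a =>
      refine MixedGraph.Determined.step (eampPa G a ∪ {Sum.inl a}) _ (Or.inr ⟨a, rfl⟩) ?_
      rintro b (⟨c, hc, rfl⟩ | hb)
      · exact MixedGraph.Determined.base _ ⟨c, h.2 c hc, rfl⟩
      · rw [Set.mem_singleton_iff] at hb
        subst hb
        exact MixedGraph.Determined.base _ ⟨a, h.1, rfl⟩

variable {G : MixedGraph α} {Z : Set α}

lemma mem_D_inl {a : α} :
    Sum.inl a ∈ MixedGraph.DSet (eampDet G) (Sum.inl '' Z) ↔ a ∈ Z :=
  det_iff G Z (Sum.inl a)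

lemma mem_D_inr {a : α} :
    Sum.inr a ∈ MixedGraph.DSet (eampDet G) (Sum.inl '' Z) ↔
      (a ∈ Z ∧ ∀ b, G.dir b a → b ∈ Z) :=
  det_iff G Z (Sum.inr a)

@[simp] lemma eamp_dir_ll {a b : α} : (eamp G).dir (inl a) (inl b) ↔ G.dir a b := Iff.rfl
@[simp] lemma eamp_dir_rl {a b : α} : (eamp G).dir (inr a) (inl b) ↔ a = b := Iff.rfl
@[simp] lemma eamp_dir_lr {a b : α} : ¬ (eamp G).dir (inl a) (inr b) := fun h => h
@[simp] lemma eamp_dir_rr {a b : α} : ¬ (eamp G).dir (inr a) (inr b) := fun h => h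
@[simp] lemma eamp_undir_rr {a b : α} : (eamp G).undir (inr a) (inr b) ↔ G.undir a b := Iff.rfl
@[simp] lemma eamp_undir_ll {a b : α} : ¬ (eamp G).undir (inl a) (inl b) := fun h => h
@[simp] lemma eamp_undir_lr {a b : α} : ¬ (eamp G).undir (inl a) (inr b) := fun h => h
@[simp] lemma eamp_undir_rl {a b : α} : ¬ (eamp G).undir (inr a) (inl b) := fun h => h

lemma eamp_simple (hS : G.Simple) : (eamp G).Simple := by
  refine ⟨?_, ?_, ?_, ?_⟩
  · rintro (a | a) h
    · exact hS.1 a h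
    · exact h
  · rintro (a | a) h
    · exact h
    · exact hS.2.1 a h
  · rintro (a | a) (b | b) h h'
    · exact hS.2.2.1 a b h h'
    · exact h
    · exact h'
    · exact h
  · rintro (a | a) (b | b) h h'
    · exact h'
    · exact h'
    · exact h'
    · exact h

lemma eamp_chain (hG : G.IsChainGraph) : (eamp G).IsChainGraph := by
  refine ⟨eamp_simple hG.1, ?_⟩
  rintro ⟨n, f, hcyc, hfirst, hstep⟩
  have C1 : ∀ j (h : j + 1 < n + 2), ∃ u, f ⟨j + 1, h⟩ = inl u := by
    intro j
    induction j with
    | zero =>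
      intro h
      cases hf1 : f 1 with
      | inl u => exact ⟨u, by rw [← hf1]; congr⟩
      | inr u =>
        exfalso
        rw [show (1 : Fin (n+2)) = ⟨1, h⟩ from rfl] at hf1
        cases hf0 : f 0 with
        | inl w => rw [hf0, show f 1 = f ⟨1, h⟩ from by congr, hf1] at hfirst; exact hfirst
        | inr w => rw [hf0, show f 1 = f ⟨1, h⟩ from by congr, hf1] at hfirst; exact hfirst
    | succ k ih =>
      intro h
      obtain ⟨u, hu⟩ := ih (by omega)
      have hs := hstep ⟨k + 1, by omega⟩
      rw [show (⟨k+1, by omega⟩ : Fin (n+1)).castSucc = ⟨k+1, by omega⟩ from rfl,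
        show (⟨k+1, by omega⟩ : Fin (n+1)).succ = ⟨k+2, h⟩ from rfl, hu] at hs
      cases hf : f ⟨k + 2, h⟩ with
      | inl w => exact ⟨w, rfl⟩
      | inr w =>
        rw [hf] at hs
        rcases hs with hs | hs
        · exact absurd hs (eamp_dir_lr)
        · exact absurd hs (eamp_undir_lr)
  have hAll : ∀ j : Fin (n + 2), ∃ u, f j = inl u := by
    rintro ⟨jv, hj⟩
    cases jv with
    | zero =>
      obtain ⟨u, hu⟩ := C1 n (by omega)
      refine ⟨u, ?_⟩
      rw [show (⟨0, hj⟩ : Fin (n+2)) = 0 from rfl, hcyc, show Fin.last (n+1) = ⟨n+1, by omega⟩ from rfl, hu]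
    | succ k => exact C1 k hj
  choose g hg using hAll
  apply hG.2
  refine ⟨n, g, ?_, ?_, ?_⟩
  · refine Sum.inl_injective (α := α) (β := α) ?_
    rw [← hg 0, ← hg (Fin.last (n+1))]
    exact hcyc
  · have := hfirst
    rw [hg 0, hg 1] at this
    exact this
  · intro i
    have := hstep i
    rw [hg i.castSucc, hg i.succ] at this
    rcases this with h | h
    · exact Or.inl h
    · exact absurd h (eamp_undir_ll)

lemma transgen_inl {v : α} {d : α ⊕ α} (h : Relation.TransGen (eamp G).dir (inl v) d) :
    ∃ w, d = inl w ∧ Relation.TransGen G.dir v w := by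
  induction h with
  | single h =>
    rename_i b
    cases b with
    | inl w => exact ⟨w, rfl, Relation.TransGen.single h⟩
    | inr w => exact absurd h eamp_dir_lr
  | tail hvc hcd ih =>
    rename_i b c
    obtain ⟨u, rfl, htg⟩ := ih
    cases c with
    | inl w => exact ⟨w, rfl, htg.tail hcd⟩
    | inr w => exact absurd hcd eamp_dir_lr

lemma san_lift {B : α} (h : B ∈ Z ∪ G.san Z) :
    Sum.inl B ∈ MixedGraph.DSet (eampDet G) (Sum.inl '' Z) ∪
      (eamp G).san (MixedGraph.DSet (eampDet G) (Sum.inl '' Z)) := by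
  rcases h with h | ⟨hBZ, w, hw, htg⟩
  · exact Or.inl (mem_D_inl.2 h)
  · by_cases hB : Sum.inl B ∈ MixedGraph.DSet (eampDet G) (Sum.inl '' Z)
    · exact Or.inl hB
    · exact Or.inr ⟨hB, inl w, mem_D_inl.2 hw,
        Relation.TransGen.lift Sum.inl (fun a b hab => hab) _ _ htg⟩

lemma san_proj {B : α}
    (h : Sum.inl B ∈ MixedGraph.DSet (eampDet G) (Sum.inl '' Z) ∪
      (eamp G).san (MixedGraph.DSet (eampDet G) (Sum.inl '' Z))) :
    B ∈ Z ∪ G.san Z := by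
  rcases h with h | ⟨hni, d, hd, htg⟩
  · exact Or.inl (mem_D_inl.1 h)
  · obtain ⟨w, rfl, htg'⟩ := transgen_inl htg
    by_cases hB : B ∈ Z
    · exact Or.inl hB
    · exact Or.inr ⟨hB, w, mem_D_inl.1 hd, htg'⟩

lemma pa_inr_eq_empty {B : α} : (eamp G).pa {Sum.inr B} = ∅ := by
  ext v
  simp only [MixedGraph.pa, Set.mem_setOf_eq, Set.mem_empty_iff_false, iff_false, not_and]
  rintro - ⟨x, hx, hdir⟩
  rw [Set.mem_singleton_iff] at hx
  subst hx
  cases' v with a a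
  · exact eamp_dir_lr hdir
  · exact eamp_dir_rr hdir

end EampFacts

section DirB

open List Relation Sum
open scoped Classical

variable {α : Type*}

def untag : α ⊕ α → α := Sum.elim id id

@[simp] lemma untag_inl (a : α) : untag (Sum.inl a) = a := rfl
@[simp] lemma untag_inr (a : α) : untag (Sum.inr a) = a := rfl

open scoped Classical in
noncomputable def proj : List (α ⊕ α) → List α
  | [] => []
  | [v] => [untag v]
  | u :: v :: t => if untag u = untag v then proj (v :: t) else untag u :: proj (v :: t)

lemma proj_nil : proj ([] : List (α ⊕ α)) = [] := rfl

lemma proj_singleton (v : α ⊕ α) : proj [v] = [untag v] := rfl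

lemma proj_cons₂ (u v : α ⊕ α) (t : List (α ⊕ α)) :
    proj (u :: v :: t) =
      if untag u = untag v then proj (v :: t) else untag u :: proj (v :: t) := by
  rw [proj]

lemma proj_head : ∀ (t : List (α ⊕ α)) (v : α ⊕ α),
    (proj (v :: t)).head? = some (untag v)
  | [], v => rfl
  | w :: t', v => by
    rw [proj_cons₂]
    by_cases h : untag v = untag w
    · rw [if_pos h, proj_head t' w, h]
    · rw [if_neg h]
      rfl

lemma proj_ne_nil (v : α ⊕ α) (t : List (α ⊕ α)) : proj (v :: t) ≠ [] := by
  intro h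
  have := proj_head t v
  rw [h] at this
  exact absurd this (by simp)

lemma proj_last : ∀ (l : List (α ⊕ α)), (proj l).getLast? = l.getLast?.map untag := by
  intro l
  induction l with
  | nil => rfl
  | cons u t ih =>
    cases t with
    | nil => rfl
    | cons v t' =>
      rw [proj_cons₂, List.getLast?_cons_cons]
      by_cases h : untag u = untag v
      · rw [if_pos h, ih]
      · rw [if_neg h]
        obtain ⟨b, M, hb⟩ := List.exists_cons_of_ne_nil (proj_ne_nil v t')
        rw [hb, List.getLast?_cons_cons, ← hb, ih]

lemma adjc {G : MixedGraph α} {u v : α ⊕ α} (h : (eamp G).adj u v)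
    (hne : untag u ≠ untag v) :
    (∃ a b, u = inl a ∧ v = inl b ∧ (G.dir a b ∨ G.dir b a)) ∨
    (∃ a b, u = inr a ∧ v = inr b ∧ G.undir a b) := by
  cases u with
  | inl a =>
    cases v with
    | inl b =>
      rcases h with h | h | h
      · exact Or.inl ⟨a, b, rfl, rfl, Or.inl h⟩
      · exact Or.inl ⟨a, b, rfl, rfl, Or.inr h⟩
      · exact absurd h eamp_undir_ll
    | inr b =>
      rcases h with h | h | h
      · exact absurd h eamp_dir_lr
      · exact absurd ((h : b = a).symm) (by simpa using hne)
      · exact absurd h eamp_undir_lr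
  | inr a =>
    cases v with
    | inl b =>
      rcases h with h | h | h
      · exact absurd (h : a = b) (by simpa using hne)
      · exact absurd h eamp_dir_lr
      · exact absurd h eamp_undir_rl
    | inr b =>
      rcases h with h | h | h
      · exact absurd h eamp_dir_rr
      · exact absurd h eamp_dir_rr
      · exact Or.inr ⟨a, b, rfl, rfl, h⟩

lemma proj_chain {G : MixedGraph α} : ∀ {l : List (α ⊕ α)},
    l.Chain' (eamp G).adj → (proj l).Chain' G.adj := by
  intro l
  induction l with
  | nil => intro _; exact List.isChain_nil
  | cons u t ih =>
    intro hc
    cases t with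
    | nil => exact List.isChain_singleton _
    | cons v t' =>
      rw [proj_cons₂]
      have hc' := (List.isChain_cons_cons.1 hc).2
      have huv := (List.isChain_cons_cons.1 hc).1
      by_cases h : untag u = untag v
      · rw [if_pos h]
        exact ih hc'
      · rw [if_neg h]
        rw [List.Chain', List.isChain_cons]
        refine ⟨?_, ih hc'⟩
        intro y hy
        rw [proj_head] at hy
        obtain rfl : untag v = y := by simpa using hy
        rcases adjc huv h with ⟨a, b, rfl, rfl, hd⟩ | ⟨a, b, rfl, rfl, hd⟩
        · rcases hd with hd | hd
          · exact Or.inl hd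
          · exact Or.inr (Or.inl hd)
        · exact Or.inr (Or.inr hd)

lemma untag_total (s : α ⊕ α) : s = inl (untag s) ∨ s = inr (untag s) := by
  cases s
  · exact Or.inl rfl
  · exact Or.inr rfl

lemma no3 {l : List (α ⊕ α)} (hnd : l.Nodup) {u v w : α ⊕ α}
    (h : [u, v, w] <:+: l) (h1 : untag u = untag v) (h2 : untag v = untag w) : False := by
  have hnd3 : ([u, v, w] : List (α ⊕ α)).Nodup := hnd.sublist h.sublist
  have huv : u ≠ v := fun e => by subst e; simp at hnd3
  have huw : u ≠ w := fun e => by subst e; simp at hnd3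
  have hvw : v ≠ w := fun e => by subst e; simp at hnd3
  rcases untag_total u with hu | hu <;> rcases untag_total v with hv | hv <;>
    rcases untag_total w with hw | hw
  · exact huv (by rw [hu, hv, h1])
  · exact huv (by rw [hu, hv, h1])
  · exact huw (by rw [hu, hw, h1, h2])
  · exact hvw (by rw [hv, hw, h2])
  · exact hvw (by rw [hv, hw, h2])
  · exact huw (by rw [hu, hw, h1, h2])
  · exact huv (by rw [hu, hv, h1])
  · exact huv (by rw [hu, hv, h1])

lemma win : ∀ (l : List (α ⊕ α)), l.Nodup → ∀ A B C : α, [A, B, C] <:+: proj l →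
    (∃ u v w, [u, v, w] <:+: l ∧ untag u = A ∧ untag v = B ∧ untag w = C ∧
      untag u ≠ untag v ∧ untag v ≠ untag w) ∨
    (∃ u v v' w, [u, v, v', w] <:+: l ∧ untag u = A ∧ untag v = B ∧ untag v' = B ∧
      untag w = C ∧ untag u ≠ untag v ∧ untag v' ≠ untag w ∧ v ≠ v') := by
  intro l
  induction l with
  | nil =>
    intro _ A B C h
    have := h.length_le
    simp [proj_nil] at this
  | cons u t ih =>
    intro hnd A B C h
    cases t with
    | nil =>
      have := h.length_le
      simp [proj_singleton] at this
    | cons v t' =>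
      rw [proj_cons₂] at h
      by_cases huv : untag u = untag v
      · rw [if_pos huv] at h
        rcases ih (List.nodup_cons.1 hnd).2 A B C h with
          ⟨a, b, c, hinf, h1, h2, h3, h4, h5⟩ | ⟨a, b, b', c, hinf, h1, h2, h3, h4, h5, h6, h7⟩
        · exact Or.inl ⟨a, b, c, hinf.trans (List.suffix_cons u _).isInfix, h1, h2, h3, h4, h5⟩
        · exact Or.inr ⟨a, b, b', c, hinf.trans (List.suffix_cons u _).isInfix,
            h1, h2, h3, h4, h5, h6, h7⟩
      · rw [if_neg huv] at h
        rcases List.infix_cons_iff.1 h with hpre | hinf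
        · obtain ⟨hA, hBC⟩ := List.cons_prefix_cons.1 hpre
          obtain ⟨rest, hrest⟩ := hBC
          -- hrest : [B, C] ++ rest = proj (v :: t')
          cases t' with
          | nil =>
            rw [proj_singleton] at hrest
            have := congrArg List.length hrest
            simp at this
          | cons w t'' =>
            rw [proj_cons₂] at hrest
            by_cases hvw : untag v = untag w
            · rw [if_pos hvw] at hrest
              cases t'' with
              | nil =>
                rw [proj_singleton] at hrest
                have := congrArg List.length hrest
                simp at this
              | cons s t3 =>
                have hws : untag w ≠ untag s := by
                  intro hws
                  exact no3 hnd (⟨[u], t3, by simp⟩ : [v, w, s] <:+: _) hvw hws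
                rw [proj_cons₂, if_neg hws] at hrest
                simp only [List.cons_append, List.nil_append, List.cons.injEq] at hrest
                obtain ⟨hB, hrest2⟩ := hrest
                have hC : C = untag s := by
                  have hh := proj_head t3 s
                  rw [← hrest2] at hh
                  simpa using hh
                have hvne : v ≠ w := by
                  have hnd4 : v ∉ (w :: s :: t3) :=
                    (List.nodup_cons.1 (List.nodup_cons.1 hnd).2).1
                  intro hvw2
                  exact hnd4 (hvw2 ▸ List.mem_cons_self)
                refine Or.inr ⟨u, v, w, s, ⟨[], t3, by simp⟩, hA.symm, hvw.trans hB.symm,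
                  hB.symm, hC.symm, huv, hws, hvne⟩
            · rw [if_neg hvw] at hrest
              simp only [List.cons_append, List.nil_append, List.cons.injEq] at hrest
              obtain ⟨hB, hrest2⟩ := hrest
              have hC : C = untag w := by
                have hh := proj_head t'' w
                rw [← hrest2] at hh
                simpa using hh
              exact Or.inl ⟨u, v, w, ⟨[], t'', by simp⟩, hA.symm, hB.symm, hC.symm, huv, hvw⟩
        · rcases ih (List.nodup_cons.1 hnd).2 A B C hinf with
            ⟨a, b, c, hinf2, h1, h2, h3, h4, h5⟩ | ⟨a, b, b', c, hinf2, h1, h2, h3, h4, h5, h6, h7⟩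
          · exact Or.inl ⟨a, b, c, hinf2.trans (List.suffix_cons u _).isInfix, h1, h2, h3, h4, h5⟩
          · exact Or.inr ⟨a, b, b', c, hinf2.trans (List.suffix_cons u _).isInfix,
              h1, h2, h3, h4, h5, h6, h7⟩

end DirB

section DirB2

open List Relation Sum MixedGraph

variable {α : Type*} {G : MixedGraph α} {Z : Set α}

lemma infix4_split {l : List (α ⊕ α)} {u v v' w : α ⊕ α} (h : [u,v,v',w] <:+: l) :
    [u,v,v'] <:+: l ∧ [v,v',w] <:+: l := by
  obtain ⟨s, t, rfl⟩ := h
  exact ⟨⟨s, w :: t, by simp⟩, ⟨s ++ [u], t, by simp⟩⟩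

lemma pair_resolve {v v' : α ⊕ α} (h : untag v = untag v') (hne : v ≠ v') :
    (v = inl (untag v) ∧ v' = inr (untag v)) ∨ (v = inr (untag v) ∧ v' = inl (untag v)) := by
  rcases untag_total v with h1 | h1 <;> rcases untag_total v' with h2 | h2
  · exact absurd (by rw [h1, h2, h] : v = v') hne
  · exact Or.inl ⟨h1, by rw [h2, h]⟩
  · exact Or.inr ⟨h1, by rw [h2, h]⟩
  · exact absurd (by rw [h1, h2, h] : v = v') hne

lemma adjc' {u v : α ⊕ α} (h : (eamp G).adj u v) (hne : untag u ≠ untag v) :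
    (u = inl (untag u) ∧ v = inl (untag v) ∧
      (G.dir (untag u) (untag v) ∨ G.dir (untag v) (untag u))) ∨
    (u = inr (untag u) ∧ v = inr (untag v) ∧ G.undir (untag u) (untag v)) := by
  rcases adjc h hne with ⟨a, b, rfl, rfl, hd⟩ | ⟨a, b, rfl, rfl, hd⟩
  · exact Or.inl ⟨rfl, rfl, hd⟩
  · exact Or.inr ⟨rfl, rfl, hd⟩

lemma dirB (hGc : G.IsChainGraph) {l : List (α ⊕ α)} (hnd : l.Nodup)
    (hOW : (eamp G).OW (MixedGraph.DSet (eampDet G) (Sum.inl '' Z)) l) :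
    G.OW Z (proj l) := by
  have hS := hGc.1
  refine ⟨proj_chain hOW.1, ?_, ?_⟩
  · -- triplex condition
    intro A B C h ht
    rcases win l hnd A B C h with ⟨u, v, w, hinf, hu, hv, hw, hne1, hne2⟩ |
      ⟨u, v, v', w, hinf, hu, hv, hv', hw, hne1, hne2, hvv'⟩
    · have hadj := adj_of_infix3 hOW.1 hinf
      rcases adjc' hadj.1 hne1 with ⟨hu1, hv1, hd1⟩ | ⟨hu1, hv1, hd1⟩ <;>
        rcases adjc' hadj.2 hne2 with ⟨hv2, hw2, hd2⟩ | ⟨hv2, hw2, hd2⟩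
      · -- all inl
        rw [hu] at hd1 hu1
        rw [hv] at hd1 hv1
        rw [hv] at hd2 hv2
        rw [hw] at hd2 hw2
        have hab : G.dir A B ∧ G.dir C B := by
          rcases ht with ⟨h1, h2⟩ | ⟨h1, h2⟩ | ⟨h1, h2⟩
          · exact ⟨h1, h2⟩
          · exfalso
            rcases hd2 with hd | hd
            · exact (not_dir_of_undir hS h2).1 hd
            · exact (not_dir_of_undir hS h2).2 hd
          · exfalso
            rcases hd1 with hd | hd
            · exact (not_dir_of_undir hS h1).1 hd
            · exact (not_dir_of_undir hS h1).2 hd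
        have ht' : (eamp G).triplex u v w := by
          rw [hu1, hv1, hw2]
          exact Or.inl ⟨hab.1, hab.2⟩
        have hmem := hOW.2.1 u v w hinf ht'
        rw [hv1] at hmem
        exact san_proj hmem
      · rw [hv1] at hv2; exact absurd hv2 (by simp)
      · rw [hv1] at hv2; exact absurd hv2 (by simp)
      · -- all inr : no triplex possible
        exfalso
        rw [hu, hv] at hd1
        rw [hv, hw] at hd2
        rcases ht with ⟨h1, h2⟩ | ⟨h1, h2⟩ | ⟨h1, h2⟩
        · exact (not_dir_of_undir hS hd1).1 h1
        · exact (not_dir_of_undir hS hd1).1 h1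
        · exact (not_dir_of_undir hS (G.undir_symm _ _ hd2)).1 h2
    · obtain ⟨h123, h234⟩ := infix4_split hinf
      have hadj123 := adj_of_infix3 hOW.1 h123
      have hadj234 := adj_of_infix3 hOW.1 h234
      rcases pair_resolve (hv.trans hv'.symm) hvv' with ⟨hvl, hv'r⟩ | ⟨hvr, hv'l⟩
      · -- v = inl B, v' = inr B
        rw [hv] at hvl hv'r
        rcases adjc' hadj123.1 hne1 with ⟨hu1, -, hd1⟩ | ⟨-, hv1, -⟩
        swap
        · rw [hvl] at hv1; exact absurd hv1 (by simp)
        rcases adjc' hadj234.2 hne2 with ⟨hv'1, -, -⟩ | ⟨-, hw2, hd2⟩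
        · rw [hv'r] at hv'1; exact absurd hv'1 (by simp)
        rw [hu] at hd1 hu1
        rw [hv] at hd1
        rw [hv'] at hd2
        rw [hw] at hd2 hw2
        have hab : G.dir A B := by
          rcases ht with ⟨h1, -⟩ | ⟨h1, -⟩ | ⟨h1, -⟩
          · exact h1
          · exact h1
          · exfalso
            rcases hd1 with hd | hd
            · exact (not_dir_of_undir hS h1).1 hd
            · exact (not_dir_of_undir hS h1).2 hd
        have ht' : (eamp G).triplex u v v' := by
          rw [hu1, hvl, hv'r]
          exact Or.inl ⟨hab, rfl⟩
        have hmem := hOW.2.1 u v v' h123 ht'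
        rw [hvl] at hmem
        exact san_proj hmem
      · -- v = inr B, v' = inl B
        rw [hv] at hvr hv'l
        rcases adjc' hadj123.1 hne1 with ⟨-, hv1, -⟩ | ⟨hu1, -, hd1⟩
        · rw [hvr] at hv1; exact absurd hv1 (by simp)
        rcases adjc' hadj234.2 hne2 with ⟨-, hw2, hd2⟩ | ⟨hv'1, -, -⟩
        swap
        · rw [hv'l] at hv'1; exact absurd hv'1 (by simp)
        rw [hu] at hd1 hu1
        rw [hv] at hd1
        rw [hv'] at hd2
        rw [hw] at hd2 hw2
        have hcb : G.dir C B := by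
          rcases ht with ⟨h1, -⟩ | ⟨h1, -⟩ | ⟨-, h2⟩
          · exact absurd h1 (not_dir_of_undir hS hd1).1
          · exact absurd h1 (not_dir_of_undir hS hd1).1
          · exact h2
        have ht' : (eamp G).triplex v v' w := by
          rw [hvr, hv'l, hw2]
          exact Or.inl ⟨rfl, hcb⟩
        have hmem := hOW.2.1 v v' w h234 ht'
        rw [hv'l] at hmem
        exact san_proj hmem
  · -- nontriplex condition
    intro A B C h hnt hBZ
    rcases win l hnd A B C h with ⟨u, v, w, hinf, hu, hv, hw, hne1, hne2⟩ |
      ⟨u, v, v', w, hinf, hu, hv, hv', hw, hne1, hne2, hvv'⟩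
    · have hadj := adj_of_infix3 hOW.1 hinf
      rcases adjc' hadj.1 hne1 with ⟨hu1, hv1, hd1⟩ | ⟨hu1, hv1, hd1⟩ <;>
        rcases adjc' hadj.2 hne2 with ⟨hv2, hw2, hd2⟩ | ⟨hv2, hw2, hd2⟩
      · -- all inl : contradiction with B ∈ Z
        exfalso
        rw [hu] at hd1 hu1
        rw [hv] at hd1 hv1
        rw [hv] at hd2 hv2
        rw [hw] at hd2 hw2
        have hnt' : (eamp G).nontriplex u v w := by
          refine ⟨hadj.1, hadj.2, ?_⟩
          rw [hu1, hv1, hw2]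
          rintro (⟨h1, h2⟩ | ⟨h1, h2⟩ | ⟨h1, h2⟩)
          · exact hnt.2.2 (Or.inl ⟨h1, h2⟩)
          · exact h2
          · exact h1
        have hres := hOW.2.2 u v w hinf hnt' (by rw [hv1]; exact mem_D_inl.2 hBZ)
        rw [hu1, hv1] at hres
        exact hres.1
      · rw [hv1] at hv2; exact absurd hv2 (by simp)
      · rw [hv1] at hv2; exact absurd hv2 (by simp)
      · -- all inr : the real case
        rw [hu] at hd1 hu1
        rw [hv] at hd1 hv1
        rw [hv] at hd2 hv2
        rw [hw] at hd2 hw2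
        have hnt' : (eamp G).nontriplex u v w := by
          refine ⟨hadj.1, hadj.2, ?_⟩
          rw [hu1, hv1, hw2]
          rintro (⟨h1, h2⟩ | ⟨h1, h2⟩ | ⟨h1, h2⟩)
          · exact h1
          · exact h1
          · exact h2
        have hnotD : Sum.inr B ∉ MixedGraph.DSet (eampDet G) (Sum.inl '' Z) := by
          intro hD
          obtain ⟨-, -, p, hp, -⟩ :=
            hOW.2.2 u v w hinf hnt' (by rw [hv1]; exact hD)
          rw [hv1, pa_inr_eq_empty] at hp
          exact hp
        have hx : ¬ ∀ b, G.dir b B → b ∈ Z := fun hall => hnotD (mem_D_inr.2 ⟨hBZ, hall⟩)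
        push_neg at hx
        obtain ⟨p, hdir, hpZ⟩ := hx
        refine ⟨hd1, hd2, p, ⟨?_, B, rfl, hdir⟩, hpZ⟩
        intro hmem
        rw [Set.mem_singleton_iff] at hmem
        subst hmem
        exact hS.1 _ hdir
    · exfalso
      obtain ⟨h123, h234⟩ := infix4_split hinf
      have hadj123 := adj_of_infix3 hOW.1 h123
      have hadj234 := adj_of_infix3 hOW.1 h234
      rcases pair_resolve (hv.trans hv'.symm) hvv' with ⟨hvl, hv'r⟩ | ⟨hvr, hv'l⟩
      · -- v = inl B, v' = inr B
        rw [hv] at hvl hv'r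
        rcases adjc' hadj123.1 hne1 with ⟨hu1, -, hd1⟩ | ⟨-, hv1, -⟩
        swap
        · rw [hvl] at hv1; exact absurd hv1 (by simp)
        rcases adjc' hadj234.2 hne2 with ⟨hv'1, -, -⟩ | ⟨-, hw2, hd2⟩
        · rw [hv'r] at hv'1; exact absurd hv'1 (by simp)
        rw [hu] at hd1 hu1
        rw [hv] at hd1
        rw [hv'] at hd2
        rw [hw] at hd2 hw2
        have hba : G.dir B A := by
          rcases hd1 with hd | hd
          · exact absurd (Or.inr (Or.inl ⟨hd, hd2⟩)) hnt.2.2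
          · exact hd
        have hnt' : (eamp G).nontriplex u v v' := by
          refine ⟨hadj123.1, hadj123.2, ?_⟩
          rw [hu1, hvl, hv'r]
          rintro (⟨h1, h2⟩ | ⟨h1, h2⟩ | ⟨h1, h2⟩)
          · exact hS.2.2.1 _ _ hba h1
          · exact h2
          · exact h1
        have hres := hOW.2.2 u v v' h123 hnt' (by rw [hvl]; exact mem_D_inl.2 hBZ)
        rw [hu1, hvl] at hres
        exact hres.1
      · -- v = inr B, v' = inl B
        rw [hv] at hvr hv'l
        rcases adjc' hadj123.1 hne1 with ⟨-, hv1, -⟩ | ⟨hu1, -, hd1⟩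
        · rw [hvr] at hv1; exact absurd hv1 (by simp)
        rcases adjc' hadj234.2 hne2 with ⟨-, hw2, hd2⟩ | ⟨hv'1, -, -⟩
        swap
        · rw [hv'l] at hv'1; exact absurd hv'1 (by simp)
        rw [hu] at hd1 hu1
        rw [hv] at hd1
        rw [hv'] at hd2
        rw [hw] at hd2 hw2
        have hbc : G.dir B C := by
          rcases hd2 with hd | hd
          · exact hd
          · exact absurd (Or.inr (Or.inr ⟨hd1, hd⟩)) hnt.2.2
        have hnt' : (eamp G).nontriplex v v' w := by
          refine ⟨hadj234.1, hadj234.2, ?_⟩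
          rw [hvr, hv'l, hw2]
          rintro (⟨h1, h2⟩ | ⟨h1, h2⟩ | ⟨h1, h2⟩)
          · exact hS.2.2.1 _ _ hbc h2
          · exact h2
          · exact h1
        have hres := hOW.2.2 v v' w h234 hnt' (by rw [hv'l]; exact mem_D_inl.2 hBZ)
        rw [hvr, hv'l] at hres
        exact hres.1

end DirB2

section DirA

open List Relation Sum MixedGraph
open scoped Classical

variable {α : Type*}

noncomputable def emb (G : MixedGraph α) : Bool → List α → List (α ⊕ α)
  | _, [] => []
  | false, [a] => [inl a]
  | true, [a] => [inr a, inl a]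
  | false, a :: b :: t =>
      if G.undir a b then inl a :: inr a :: emb G true (b :: t)
      else inl a :: emb G false (b :: t)
  | true, a :: b :: t =>
      if G.undir a b then inr a :: emb G true (b :: t)
      else inr a :: inl a :: emb G false (b :: t)

variable {G : MixedGraph α} {Z : Set α}

lemma emb_false_cons (a b : α) (t : List α) :
    emb G false (a :: b :: t) =
      if G.undir a b then inl a :: inr a :: emb G true (b :: t)
      else inl a :: emb G false (b :: t) := by
  rw [emb]

lemma emb_true_cons (a b : α) (t : List α) :
    emb G true (a :: b :: t) =
      if G.undir a b then inr a :: emb G true (b :: t)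
      else inr a :: inl a :: emb G false (b :: t) := by
  rw [emb]

lemma emb_head_false (t : List α) (a : α) :
    (emb G false (a :: t)).head? = some (inl a) := by
  cases t with
  | nil => rfl
  | cons b t' => rw [emb_false_cons]; split_ifs <;> rfl

lemma emb_head_true (t : List α) (a : α) :
    (emb G true (a :: t)).head? = some (inr a) := by
  cases t with
  | nil => rfl
  | cons b t' => rw [emb_true_cons]; split_ifs <;> rfl

lemma emb_ne_nil (f : Bool) (t : List α) (a : α) : emb G f (a :: t) ≠ [] := by
  intro h
  cases f
  · have := emb_head_false (G := G) t a
    rw [h] at this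
    exact absurd this (by simp)
  · have := emb_head_true (G := G) t a
    rw [h] at this
    exact absurd this (by simp)

lemma getLast?_cons_of_ne_nil {γ : Type*} {l : List γ} (h : l ≠ []) (x : γ) :
    (x :: l).getLast? = l.getLast? := by
  obtain ⟨b, M, rfl⟩ := List.exists_cons_of_ne_nil h
  rw [List.getLast?_cons_cons]

lemma emb_last : ∀ (t : List α) (a : α) (f : Bool),
    (emb G f (a :: t)).getLast? = ((a :: t).getLast?).map inl := by
  intro t
  induction t with
  | nil =>
    intro a f
    cases f <;> rfl
  | cons b t' ih =>
    intro a f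
    have hgl : ((a :: b :: t').getLast?).map (inl (α := α) (β := α)) =
        ((b :: t').getLast?).map (inl (α := α) (β := α)) := by
      rw [List.getLast?_cons_cons]
    cases f
    · rw [emb_false_cons]
      split_ifs with h
      · rw [getLast?_cons_of_ne_nil (by simp [emb_ne_nil]) _,
          getLast?_cons_of_ne_nil (emb_ne_nil true t' b) _, ih b true, hgl]
      · rw [getLast?_cons_of_ne_nil (emb_ne_nil false t' b) _, ih b false, hgl]
    · rw [emb_true_cons]
      split_ifs with h
      · rw [getLast?_cons_of_ne_nil (emb_ne_nil true t' b) _, ih b true, hgl]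
      · rw [getLast?_cons_of_ne_nil (by simp [emb_ne_nil]) _,
          getLast?_cons_of_ne_nil (emb_ne_nil false t' b) _, ih b false, hgl]

lemma emb_chain : ∀ (t : List α) (a : α) (f : Bool), (a :: t).Chain' G.adj →
    (emb G f (a :: t)).Chain' (eamp G).adj := by
  intro t
  induction t with
  | nil =>
    intro a f _
    cases f
    · exact List.isChain_singleton _
    · refine List.isChain_cons_cons.2 ⟨Or.inl rfl, List.isChain_singleton _⟩
  | cons b t' ih =>
    intro a f hc
    obtain ⟨hab, hc'⟩ := List.isChain_cons_cons.1 hc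
    cases f
    · rw [emb_false_cons]
      split_ifs with h
      · refine List.isChain_cons_cons.2 ⟨Or.inr (Or.inl rfl), ?_⟩
        refine List.isChain_cons.2 ⟨?_, ih b true hc'⟩
        intro y hy
        rw [emb_head_true] at hy
        obtain rfl : inr b = y := by simpa using hy
        exact Or.inr (Or.inr h)
      · refine List.isChain_cons.2 ⟨?_, ih b false hc'⟩
        intro y hy
        rw [emb_head_false] at hy
        obtain rfl : inl b = y := by simpa using hy
        rcases hab with hd | hd | hd
        · exact Or.inl hd
        · exact Or.inr (Or.inl hd)
        · exact absurd hd h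
    · rw [emb_true_cons]
      split_ifs with h
      · refine List.isChain_cons.2 ⟨?_, ih b true hc'⟩
        intro y hy
        rw [emb_head_true] at hy
        obtain rfl : inr b = y := by simpa using hy
        exact Or.inr (Or.inr h)
      · refine List.isChain_cons_cons.2 ⟨Or.inl rfl, ?_⟩
        refine List.isChain_cons.2 ⟨?_, ih b false hc'⟩
        intro y hy
        rw [emb_head_false] at hy
        obtain rfl : inl b = y := by simpa using hy
        rcases hab with hd | hd | hd
        · exact Or.inl hd
        · exact Or.inr (Or.inl hd)
        · exact absurd hd h

/-- The triple conditions in the EAMP graph, for a given middle node. -/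
def tripOK (G : MixedGraph α) (Z : Set α) (A B C : α ⊕ α) : Prop :=
  ((eamp G).triplex A B C →
    B ∈ MixedGraph.DSet (eampDet G) (inl '' Z) ∪
      (eamp G).san (MixedGraph.DSet (eampDet G) (inl '' Z))) ∧
  ((eamp G).nontriplex A B C → B ∈ MixedGraph.DSet (eampDet G) (inl '' Z) →
    ((eamp G).undir A B ∧ (eamp G).undir B C ∧
      ∃ p ∈ (eamp G).pa {B}, p ∉ MixedGraph.DSet (eampDet G) (inl '' Z)))

lemma tripOK_of_mid {A B C : α ⊕ α} (hnotrip : ¬ (eamp G).triplex A B C)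
    (hnD : B ∉ MixedGraph.DSet (eampDet G) (inl '' Z)) : tripOK G Z A B C :=
  ⟨fun ht => absurd ht hnotrip, fun _ hD => absurd hD hnD⟩

lemma notrip_l_r_r {x m y : α} : ¬ (eamp G).triplex (inl x) (inr m) (inr y) := by
  rintro (⟨t1, -⟩ | ⟨t1, -⟩ | ⟨t1, -⟩)
  · exact t1
  · exact t1
  · exact t1

lemma notrip_r_r_l {x m y : α} : ¬ (eamp G).triplex (inr x) (inr m) (inl y) := by
  rintro (⟨t1, -⟩ | ⟨t1, -⟩ | ⟨-, t2⟩)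
  · exact t1
  · exact t1
  · exact t2

lemma notrip_r_r_r {x m y : α} : ¬ (eamp G).triplex (inr x) (inr m) (inr y) := by
  rintro (⟨t1, -⟩ | ⟨t1, -⟩ | ⟨-, t2⟩)
  · exact t1
  · exact t1
  · exact t2

lemma adj2_of_infix {l : List α} (hc : l.Chain' G.adj) {a b : α}
    (h : [a, b] <:+: l) : G.adj a b := by
  have h2 := hc.infix h
  simp only [List.isChain_cons_cons, List.isChain_singleton, and_true] at h2
  exact h2

end DirA

section DirA2

open List Relation Sum MixedGraph
open scoped Classical

variable {α : Type*} {G : MixedGraph α} {Z : Set α} {l : List α}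

lemma keyL (hS : G.Simple) (hOW : G.OW Z l)
    (hx : ∀ v, l.head? = some v → v ∉ Z) (hy : ∀ v, l.getLast? = some v → v ∉ Z) :
    ∀ (pre : List α) (a : α) (t : List α), l = pre ++ a :: t →
    (pre = [] ∨ ∃ pre' w, pre = pre' ++ [w] ∧ (G.dir w a ∨ G.dir a w)) →
    Sum.inr a ∉ MixedGraph.DSet (eampDet G) (inl '' Z) := by
  intro pre a t hl hctx hD
  obtain ⟨haZ, hall⟩ := mem_D_inr.1 hD
  rcases hctx with rfl | ⟨pre', w, rfl, hdir⟩
  · exact hx a (by rw [hl]; rfl) haZ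
  · rcases hdir with hwa | haw
    · have hwZ := hall w hwa
      rcases List.eq_nil_or_concat pre' with rfl | ⟨pre'', u, hpre'⟩
      · exact hx w (by rw [hl]; rfl) hwZ
      · have hinf : [u, w, a] <:+: l :=
          ⟨pre'', t, by rw [hl, hpre', List.concat_eq_append]; simp⟩
        exact L1 hS hOW hinf (Or.inr hwa) hwZ
    · cases t with
      | nil =>
        refine hy a ?_ haZ
        rw [hl, show pre' ++ [w] ++ [a] = (pre' ++ [w]) ++ [a] from by simp]
        exact List.getLast?_concat
      | cons b t' =>
        have hinf : [w, a, b] <:+: l := ⟨pre', t', by rw [hl]; simp⟩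
        exact L1 hS hOW hinf (Or.inl haw) haZ

lemma keyR (hS : G.Simple) (hOW : G.OW Z l)
    (hx : ∀ v, l.head? = some v → v ∉ Z) (hy : ∀ v, l.getLast? = some v → v ∉ Z) :
    ∀ (pre : List α) (a : α) (t : List α), l = pre ++ a :: t →
    (t = [] ∨ ∃ b t', t = b :: t' ∧ (G.dir a b ∨ G.dir b a)) →
    Sum.inr a ∉ MixedGraph.DSet (eampDet G) (inl '' Z) := by
  intro pre a t hl hctx hD
  obtain ⟨haZ, hall⟩ := mem_D_inr.1 hD
  rcases hctx with rfl | ⟨b, t', rfl, hdir⟩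
  · refine hy a ?_ haZ
    rw [hl]
    exact List.getLast?_concat
  · rcases hdir with hab | hba
    · rcases List.eq_nil_or_concat pre with rfl | ⟨pre', u, hpre⟩
      · exact hx a (by rw [hl]; rfl) haZ
      · have hinf : [u, a, b] <:+: l :=
          ⟨pre', t', by rw [hl, hpre, List.concat_eq_append]; simp⟩
        exact L1 hS hOW hinf (Or.inr hab) haZ
    · have hbZ := hall b hba
      cases t' with
      | nil =>
        refine hy b ?_ hbZ
        rw [hl, show pre ++ a :: b :: ([] : List α) = (pre ++ [a]) ++ [b] from by simp]
        exact List.getLast?_concat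
      | cons c t'' =>
        have hinf : [a, b, c] <:+: l := ⟨pre, t'', by rw [hl]; simp⟩
        exact L1 hS hOW hinf (Or.inl hba) hbZ

lemma keyM (hS : G.Simple) (hOW : G.OW Z l) :
    ∀ (pre : List α) (a b c : α) (t : List α), l = pre ++ a :: b :: c :: t →
    G.undir a b → G.undir b c →
    Sum.inr b ∉ MixedGraph.DSet (eampDet G) (inl '' Z) := by
  intro pre a b c t hl hu1 hu2 hD
  obtain ⟨hbZ, hall⟩ := mem_D_inr.1 hD
  have hinf : [a, b, c] <:+: l := ⟨pre, t, by rw [hl]; simp⟩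
  have hadj := adj_of_infix3 hOW.1 hinf
  have hnt : G.nontriplex a b c := by
    refine ⟨hadj.1, hadj.2, ?_⟩
    rintro (⟨t1, -⟩ | ⟨t1, -⟩ | ⟨-, t2⟩)
    · exact (not_dir_of_undir hS hu1).1 t1
    · exact (not_dir_of_undir hS hu1).1 t1
    · exact (not_dir_of_undir hS hu2).2 t2
  obtain ⟨-, -, p, hp, hpZ⟩ := hOW.2.2 a b c hinf hnt hbZ
  obtain ⟨-, x, hx1, hdir⟩ := hp
  rw [Set.mem_singleton_iff] at hx1
  subst hx1
  exact hpZ (hall p hdir)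

lemma hOne (hS : G.Simple) (hOW : G.OW Z l) {a b c : α} (habc : [a, b, c] <:+: l)
    (hnu1 : ¬ G.undir a b) (hnu2 : ¬ G.undir b c) :
    tripOK G Z (inl a) (inl b) (inl c) := by
  have hadj := adj_of_infix3 hOW.1 habc
  have hd1 : G.dir a b ∨ G.dir b a := by
    rcases hadj.1 with h | h | h
    exacts [Or.inl h, Or.inr h, absurd h hnu1]
  have hd2 : G.dir b c ∨ G.dir c b := by
    rcases hadj.2 with h | h | h
    exacts [Or.inl h, Or.inr h, absurd h hnu2]
  constructor
  · rintro (⟨t1, t2⟩ | ⟨-, t2⟩ | ⟨t1, -⟩)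
    · exact san_lift (hOW.2.1 a b c habc (Or.inl ⟨t1, t2⟩))
    · exact absurd t2 eamp_undir_ll
    · exact absurd t1 eamp_undir_ll
  · intro hnt hbD
    exfalso
    have hbZ := mem_D_inl.1 hbD
    rcases hd1 with h1 | h1
    · rcases hd2 with h2 | h2
      · exact L1 hS hOW habc (Or.inr h2) hbZ
      · exact hnt.2.2 (Or.inl ⟨h1, h2⟩)
    · exact L1 hS hOW habc (Or.inl h1) hbZ

lemma hTwo (hS : G.Simple) (hOW : G.OW Z l) {a b c : α} (habc : [a, b, c] <:+: l)
    (hnu1 : ¬ G.undir a b) (hu2 : G.undir b c) :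
    tripOK G Z (inl a) (inl b) (inr b) := by
  have hadj := adj_of_infix3 hOW.1 habc
  have hd1 : G.dir a b ∨ G.dir b a := by
    rcases hadj.1 with h | h | h
    exacts [Or.inl h, Or.inr h, absurd h hnu1]
  constructor
  · rintro (⟨t1, -⟩ | ⟨-, t2⟩ | ⟨t1, -⟩)
    · exact san_lift (hOW.2.1 a b c habc (Or.inr (Or.inl ⟨t1, hu2⟩)))
    · exact absurd t2 eamp_undir_lr
    · exact absurd t1 eamp_undir_ll
  · intro hnt hbD
    exfalso
    have hbZ := mem_D_inl.1 hbD
    rcases hd1 with h1 | h1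
    · exact hnt.2.2 (Or.inl ⟨h1, rfl⟩)
    · exact L1 hS hOW habc (Or.inl h1) hbZ

lemma hTwoR (hS : G.Simple) (hOW : G.OW Z l) {w a b : α} (habc : [w, a, b] <:+: l)
    (hu1 : G.undir w a) (hnu2 : ¬ G.undir a b) :
    tripOK G Z (inr a) (inl a) (inl b) := by
  have hadj := adj_of_infix3 hOW.1 habc
  have hd2 : G.dir a b ∨ G.dir b a := by
    rcases hadj.2 with h | h | h
    exacts [Or.inl h, Or.inr h, absurd h hnu2]
  constructor
  · rintro (⟨-, t2⟩ | ⟨-, t2⟩ | ⟨t1, -⟩)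
    · exact san_lift (hOW.2.1 w a b habc (Or.inr (Or.inr ⟨hu1, t2⟩)))
    · exact absurd t2 eamp_undir_ll
    · exact absurd t1 eamp_undir_rl
  · intro hnt haD
    exfalso
    have haZ := mem_D_inl.1 haD
    rcases hd2 with h2 | h2
    · exact L1 hS hOW habc (Or.inr h2) haZ
    · exact hnt.2.2 (Or.inl ⟨rfl, h2⟩)

lemma blockTrue (hS : G.Simple) (hOW : G.OW Z l)
    (hx : ∀ v, l.head? = some v → v ∉ Z) (hy : ∀ v, l.getLast? = some v → v ∉ Z) :
    ∀ (pre : List α) (a b : α) (t' : List α), l = pre ++ a :: b :: t' → G.undir a b →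
    ∀ B C, [B, C] <+: emb G true (b :: t') → tripOK G Z (inr a) B C := by
  intro pre a b t' hl hu B C hpre
  obtain ⟨rest, hrest⟩ := hpre
  cases t' with
  | nil =>
    have hrest' : B :: C :: rest = [inr b, inl b] := hrest
    injection hrest' with hB hrest2
    injection hrest2 with hC hrest3
    subst hB; subst hC
    exact tripOK_of_mid notrip_r_r_l
      (keyR hS hOW hx hy (pre ++ [a]) b [] (by rw [hl]; simp) (Or.inl rfl))
  | cons c t'' =>
    by_cases hbc : G.undir b c
    · rw [emb_true_cons, if_pos hbc] at hrest
      have hrest' : B :: C :: rest = inr b :: emb G true (c :: t'') := hrest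
      injection hrest' with hB htail
      subst hB
      have hC : C = inr c := by
        have hh := emb_head_true (G := G) t'' c
        rw [← htail] at hh
        simpa using hh
      subst hC
      exact tripOK_of_mid notrip_r_r_r (keyM hS hOW pre a b c t'' hl hu hbc)
    · rw [emb_true_cons, if_neg hbc] at hrest
      have hrest' : B :: C :: rest = inr b :: inl b :: emb G false (c :: t'') := hrest
      injection hrest' with hB htail
      subst hB
      injection htail with hC _
      subst hC
      have hadjbc : G.adj b c := adj2_of_infix hOW.1 ⟨pre ++ [a], t'', by rw [hl]; simp⟩
      have hd : G.dir b c ∨ G.dir c b := by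
        rcases hadjbc with h | h | h
        exacts [Or.inl h, Or.inr h, absurd h hbc]
      exact tripOK_of_mid notrip_r_r_l
        (keyR hS hOW hx hy (pre ++ [a]) b (c :: t'') (by rw [hl]; simp)
          (Or.inr ⟨c, t'', rfl, hd⟩))

lemma blockFalse (hS : G.Simple) (hOW : G.OW Z l)
    (hx : ∀ v, l.head? = some v → v ∉ Z) (hy : ∀ v, l.getLast? = some v → v ∉ Z) :
    ∀ (pre : List α) (a b : α) (t' : List α), l = pre ++ a :: b :: t' → ¬ G.undir a b →
    ∀ B C, [B, C] <+: emb G false (b :: t') → tripOK G Z (inl a) B C := by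
  intro pre a b t' hl hnu B C hpre
  obtain ⟨rest, hrest⟩ := hpre
  cases t' with
  | nil =>
    exfalso
    have hrest' : B :: C :: rest = [inl b] := hrest
    have := congrArg List.length hrest'
    simp at this
  | cons c t'' =>
    by_cases hbc : G.undir b c
    · rw [emb_false_cons, if_pos hbc] at hrest
      have hrest' : B :: C :: rest = inl b :: inr b :: emb G true (c :: t'') := hrest
      injection hrest' with hB htail
      subst hB
      injection htail with hC _
      subst hC
      exact hTwo hS hOW ⟨pre, t'', by rw [hl]; simp⟩ hnu hbc
    · rw [emb_false_cons, if_neg hbc] at hrest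
      have hrest' : B :: C :: rest = inl b :: emb G false (c :: t'') := hrest
      injection hrest' with hB htail
      subst hB
      have hC : C = inl c := by
        have hh := emb_head_false (G := G) t'' c
        rw [← htail] at hh
        simpa using hh
      subst hC
      exact hOne hS hOW ⟨pre, t'', by rw [hl]; simp⟩ hnu hbc

lemma embT (hS : G.Simple) (hOW : G.OW Z l)
    (hx : ∀ v, l.head? = some v → v ∉ Z) (hy : ∀ v, l.getLast? = some v → v ∉ Z) :
    ∀ (t : List α) (a : α) (f : Bool) (pre : List α), l = pre ++ a :: t →
    (f = true → ∃ pre' w, pre = pre' ++ [w] ∧ G.undir w a) →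
    (f = false → pre = [] ∨ ∃ pre' w, pre = pre' ++ [w] ∧ (G.dir w a ∨ G.dir a w)) →
    ∀ A B C, [A, B, C] <:+: emb G f (a :: t) → tripOK G Z A B C := by
  intro t
  induction t with
  | nil =>
    intro a f pre hl hT hF A B C hinf
    exfalso
    have hlen := hinf.length_le
    cases f
    · simp [show emb G false [a] = [inl a] from rfl] at hlen
    · simp [show emb G true [a] = [inr a, inl a] from rfl] at hlen
  | cons b t' ih =>
    intro a f pre hl hT hF A B C hinf
    have hadj_ab : G.adj a b := adj2_of_infix hOW.1 ⟨pre, t', by rw [hl]; simp⟩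
    cases f
    · have hctx := hF rfl
      by_cases hab : G.undir a b
      · rw [emb_false_cons, if_pos hab] at hinf
        rcases List.infix_cons_iff.1 hinf with hpre | hinf2
        · obtain ⟨rfl, hpre2⟩ := List.cons_prefix_cons.1 hpre
          obtain ⟨rfl, hpre3⟩ := List.cons_prefix_cons.1 hpre2
          obtain ⟨rest, hrest⟩ := hpre3
          have hC : C = inr b := by
            have hh := emb_head_true (G := G) t' b
            rw [← hrest] at hh
            simpa using hh
          subst hC
          exact tripOK_of_mid notrip_l_r_r (keyL hS hOW hx hy pre a (b :: t') hl hctx)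
        rcases List.infix_cons_iff.1 hinf2 with hpre | hinf3
        · obtain ⟨rfl, hpre2⟩ := List.cons_prefix_cons.1 hpre
          exact blockTrue hS hOW hx hy pre a b t' hl hab B C hpre2
        · exact ih b true (pre ++ [a]) (by rw [hl]; simp) (fun _ => ⟨pre, a, rfl, hab⟩)
            (fun h => Bool.noConfusion h) A B C hinf3
      · rw [emb_false_cons, if_neg hab] at hinf
        rcases List.infix_cons_iff.1 hinf with hpre | hinf2
        · obtain ⟨rfl, hpre2⟩ := List.cons_prefix_cons.1 hpre
          exact blockFalse hS hOW hx hy pre a b t' hl hab B C hpre2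
        · have hd : G.dir a b ∨ G.dir b a := by
            rcases hadj_ab with h | h | h
            exacts [Or.inl h, Or.inr h, absurd h hab]
          exact ih b false (pre ++ [a]) (by rw [hl]; simp) (fun h => Bool.noConfusion h)
            (fun _ => Or.inr ⟨pre, a, rfl, hd⟩) A B C hinf2
    · obtain ⟨pre', w, rfl, hwa⟩ := hT rfl
      by_cases hab : G.undir a b
      · rw [emb_true_cons, if_pos hab] at hinf
        rcases List.infix_cons_iff.1 hinf with hpre | hinf2
        · obtain ⟨rfl, hpre2⟩ := List.cons_prefix_cons.1 hpre
          exact blockTrue hS hOW hx hy (pre' ++ [w]) a b t' hl hab B C hpre2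
        · exact ih b true ((pre' ++ [w]) ++ [a]) (by rw [hl]; simp)
            (fun _ => ⟨pre' ++ [w], a, rfl, hab⟩) (fun h => Bool.noConfusion h) A B C hinf2
      · rw [emb_true_cons, if_neg hab] at hinf
        rcases List.infix_cons_iff.1 hinf with hpre | hinf2
        · obtain ⟨rfl, hpre2⟩ := List.cons_prefix_cons.1 hpre
          obtain ⟨rfl, hpre3⟩ := List.cons_prefix_cons.1 hpre2
          obtain ⟨rest, hrest⟩ := hpre3
          have hC : C = inl b := by
            have hh := emb_head_false (G := G) t' b
            rw [← hrest] at hh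
            simpa using hh
          subst hC
          exact hTwoR hS hOW ⟨pre', t', by rw [hl]; simp⟩ hwa hab
        rcases List.infix_cons_iff.1 hinf2 with hpre | hinf3
        · obtain ⟨rfl, hpre2⟩ := List.cons_prefix_cons.1 hpre
          exact blockFalse hS hOW hx hy (pre' ++ [w]) a b t' hl hab B C hpre2
        · have hd : G.dir a b ∨ G.dir b a := by
            rcases hadj_ab with h | h | h
            exacts [Or.inl h, Or.inr h, absurd h hab]
          exact ih b false ((pre' ++ [w]) ++ [a]) (by rw [hl]; simp)
            (fun h => Bool.noConfusion h) (fun _ => Or.inr ⟨pre' ++ [w], a, rfl, hd⟩)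
            A B C hinf3

end DirA2

open List Relation Sum MixedGraph in
/-- Theorem 1: `I_AMP(G) = [I_AMP(G')]_ε`: for all disjoint
`X, Y, Z ⊆ V`, X is AMP-separated from Y given Z in G iff X is AMP-separated
from Y given Z in the EAMP CG G' with its deterministic nodes. -/
theorem stmt6 {α : Type*} (G : MixedGraph α) (hG : G.IsChainGraph)
    (X Y Z : Set α) (hXY : Disjoint X Y) (hXZ : Disjoint X Z) (hYZ : Disjoint Y Z) :
    G.AMPSep Z X Y ↔
      (eamp G).AMPSep (MixedGraph.DSet (eampDet G) (Sum.inl '' Z))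
        (Sum.inl '' X) (Sum.inl '' Y) := by
  have hS := hG.1
  have hG' := eamp_chain hG
  constructor
  · intro hsep l' x' y' hx' hy' hhead hlast hopen
    obtain ⟨x, hxX, rfl⟩ := hx'
    obtain ⟨y, hyY, rfl⟩ := hy'
    rw [ampOpenPath_iff_ow] at hopen
    obtain ⟨hne, hnd, hOW'⟩ := hopen
    have hw : G.OW Z (proj l') := dirB hG hnd hOW'
    obtain ⟨l2, hnd2, hOW2, hh2, hl2⟩ :=
      MixedGraph.OW.toPath hG (proj l').length (proj l') le_rfl hw
    obtain ⟨t0, rfl⟩ := List.head?_eq_some_iff.1 hhead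
    refine hsep l2 x y hxX hyY ?_ ?_ ?_
    · rw [hh2, proj_head]
      rfl
    · rw [hl2, proj_last, hlast]
      rfl
    · rw [ampOpenPath_iff_ow]
      refine ⟨?_, hnd2, hOW2⟩
      intro hnil
      rw [hnil] at hh2
      rw [proj_head] at hh2
      exact absurd hh2 (by simp)
  · intro hsep l x y hxX hyY hhead hlast hopen
    rw [ampOpenPath_iff_ow] at hopen
    obtain ⟨hne, hnd, hOW⟩ := hopen
    obtain ⟨t0, rfl⟩ := List.head?_eq_some_iff.1 hhead
    have hxZ : ∀ v, (x :: t0).head? = some v → v ∉ Z := by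
      intro v hv
      obtain rfl : x = v := by simpa using hv
      exact Set.disjoint_left.1 hXZ hxX
    have hyZ : ∀ v, (x :: t0).getLast? = some v → v ∉ Z := by
      intro v hv
      rw [hlast] at hv
      obtain rfl : y = v := by simpa using hv
      exact Set.disjoint_left.1 hYZ hyY
    have hOWemb : (eamp G).OW (MixedGraph.DSet (eampDet G) (Sum.inl '' Z))
        (emb G false (x :: t0)) := by
      refine ⟨emb_chain t0 x false hOW.1, ?_, ?_⟩
      · intro A B C hinf ht
        exact (embT hS hOW hxZ hyZ t0 x false [] rfl (fun h => Bool.noConfusion h)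
          (fun _ => Or.inl rfl) A B C hinf).1 ht
      · intro A B C hinf hnt hD
        exact (embT hS hOW hxZ hyZ t0 x false [] rfl (fun h => Bool.noConfusion h)
          (fun _ => Or.inl rfl) A B C hinf).2 hnt hD
    obtain ⟨l2, hnd2, hOW2, hh2, hl2⟩ :=
      MixedGraph.OW.toPath hG' (emb G false (x :: t0)).length _ le_rfl hOWemb
    refine hsep l2 (Sum.inl x) (Sum.inl y) ⟨x, hxX, rfl⟩ ⟨y, hyY, rfl⟩ ?_ ?_ ?_
    · rw [hh2, emb_head_false]
    · rw [hl2, emb_last, hlast]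
      rfl
    · rw [ampOpenPath_iff_ow]
      refine ⟨?_, hnd2, hOW2⟩
      intro hnil
      rw [hnil] at hh2
      rw [emb_head_false] at hh2
      exact absurd hh2 (by simp)
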